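/- Let s_α be a Sturmian word of angle α (irrational, 0 < α < 1), and let n be a positive even integer. A factor t of s_α of length n is an abelian square if and only if: t is light (Parikh vector (⌊nα⌋, n − ⌊nα⌋)) when ⌊nα⌋ is even, or t is heavy (Parikh vector (⌈nα⌉, n − ⌈nα⌉)) when ⌊nα⌋ is odd. -/

import Mathlib

open scoped Classical

/-- `u` is a factor of the infinite word `s`. -/
def FactorOf {A : Type*} (u : List A) (s : ℕ → A) : Prop :=
  ∃ i : ℕ, u = (List.range u.length).map fun k => s (i + k)

/-- The Sturmian word of angle `α` and initial point `ρ`, with `a = true`: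
position `n` is `a` iff `{ρ + nα} ∈ [1−α, 1)`. -/
noncomputable def sturmian (α ρ : ℝ) (n : ℕ) : Bool :=
  if 1 - α ≤ Int.fract (ρ + n * α) then true else false

/-- An abelian square: a word `u ++ v` with `|u| = |v|` and equal Parikh
vectors. -/
def IsAbelianSquare (w : List Bool) : Prop :=
  ∃ u v : List Bool, w = u ++ v ∧ u.length = v.length ∧
    ∀ c, u.count c = v.count c

private lemma floor_add_alpha (α : ℝ) (h0 : 0 < α) (h1 : α < 1) (x : ℝ) :
    ⌊x + α⌋ = ⌊x⌋ + (if 1 - α ≤ Int.fract x then 1 else 0) := by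
  have hx : x + α = (⌊x⌋ : ℝ) + (Int.fract x + α) := by
    have := Int.floor_add_fract x; linarith
  have hf0 := Int.fract_nonneg x
  have hf1 := Int.fract_lt_one x
  rw [hx, Int.floor_intCast_add]
  split_ifs with h
  · have : ⌊Int.fract x + α⌋ = 1 := by
      rw [Int.floor_eq_iff] <;> push_cast <;> constructor <;> linarith
    omega
  · have : ⌊Int.fract x + α⌋ = 0 := by
      rw [Int.floor_eq_iff] <;> push_cast <;> constructor <;> linarith [not_le.1 h]
    omega

private lemma count_sturmian (α ρ : ℝ) (h0 : 0 < α) (h1 : α < 1) :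
    ∀ (L i : ℕ),
      (((List.range L).map fun k => sturmian α ρ (i + k)).count true : ℤ)
        = ⌊ρ + ((i + L : ℕ) : ℝ) * α⌋ - ⌊ρ + (i : ℝ) * α⌋ := by
  intro L i
  induction L with
  | zero => simp
  | succ L ih =>
    rw [List.range_succ, List.map_append, List.count_append]
    have harg : ρ + ((i + (L + 1) : ℕ) : ℝ) * α = (ρ + ((i + L : ℕ) : ℝ) * α) + α := by
      push_cast; ring
    rw [harg, floor_add_alpha α h0 h1]
    have harg2 : ((i + L : ℕ) : ℝ) * α = ((i : ℕ) + (L : ℕ) : ℝ) * α := by push_cast; ring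
    by_cases hc : 1 - α ≤ Int.fract (ρ + ((i + L : ℕ) : ℝ) * α)
    · have hs : sturmian α ρ (i + L) = true := by
        unfold sturmian; rw [if_pos hc]
      rw [if_pos hc]
      simp only [List.map_cons, List.map_nil, hs,
        show List.count true [true] = 1 from rfl]
      push_cast at ih ⊢
      omega
    · have hs : sturmian α ρ (i + L) = false := by
        unfold sturmian; rw [if_neg hc]
      rw [if_neg hc]
      simp only [List.map_cons, List.map_nil, hs,
        show List.count true [false] = 0 from rfl]
      push_cast at ih ⊢
      omega

private lemma floor_add_bounds (x y : ℝ) :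
    ⌊x⌋ + ⌊y⌋ ≤ ⌊x + y⌋ ∧ ⌊x + y⌋ ≤ ⌊x⌋ + ⌊y⌋ + 1 := by
  constructor
  · apply Int.le_floor.2
    push_cast
    have := Int.floor_le x; have := Int.floor_le y; linarith
  · have h : ⌊x + y⌋ < ⌊x⌋ + ⌊y⌋ + 2 := by
      apply Int.floor_lt.2
      push_cast
      have := Int.lt_floor_add_one x; have := Int.lt_floor_add_one y; linarith
    omega

private lemma ceil_irr (x : ℝ) (hx : Irrational x) : ⌈x⌉ = ⌊x⌋ + 1 := by
  have h3 : (⌊x⌋ : ℝ) < x := lt_of_le_of_ne (Int.floor_le x) (Ne.symm ((hx.ne_int ⌊x⌋)))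
  have h4 : ⌈x⌉ ≤ ⌊x⌋ + 1 := Int.ceil_le.2 (by push_cast; linarith [Int.lt_floor_add_one x])
  have h5 : ⌊x⌋ < ⌈x⌉ := by exact_mod_cast h3.trans_le (Int.le_ceil x)
  omega

private lemma count_false_true (l : List Bool) : l.count false + l.count true = l.length := by
  induction l with
  | nil => simp
  | cons b l ih => cases b <;> simp [List.count_cons] <;> omega

private lemma abelianSquare_iff (t : List Bool) (m : ℕ) (hlen : t.length = m + m) :
    IsAbelianSquare t ↔ (t.take m).count true = (t.drop m).count true := by
  constructor
  · rintro ⟨u, v, rfl, hle, hc⟩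
    have hu : u.length = m := by
      rw [List.length_append] at hlen; omega
    have h1 : (u ++ v).take m = u := by rw [← hu]; exact List.take_left
    have h2 : (u ++ v).drop m = v := by rw [← hu]; exact List.drop_left
    rw [h1, h2]; exact hc true
  · intro h
    refine ⟨t.take m, t.drop m, (List.take_append_drop m t).symm, ?_, ?_⟩
    · simp [hlen]
    · intro c
      have l1 : (t.take m).length = m := by simp [hlen]
      have l2 : (t.drop m).length = m := by simp [hlen]
      cases c
      · have e1 := count_false_true (t.take m)
        have e2 := count_false_true (t.drop m)
        omega
      · exact h

theorem stmt13 (α ρ : ℝ) (hirr : Irrational α) (h0 : 0 < α) (h1 : α < 1)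
    (n : ℕ) (hn : 0 < n) (hev : Even n) (t : List Bool)
    (ht : FactorOf t (sturmian α ρ)) (hlen : t.length = n) :
    (Even ⌊(n : ℝ) * α⌋ →
      (IsAbelianSquare t ↔ (t.count true : ℤ) = ⌊(n : ℝ) * α⌋)) ∧
    (Odd ⌊(n : ℝ) * α⌋ →
      (IsAbelianSquare t ↔ (t.count true : ℤ) = ⌈(n : ℝ) * α⌉)) := by
  obtain ⟨m, hm⟩ := hev
  obtain ⟨i, hi⟩ := ht
  rw [hlen] at hi
  set y : ℝ := ρ + (i : ℝ) * α with hy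
  -- total count
  have hct : (t.count true : ℤ) = ⌊y + (n : ℝ) * α⌋ - ⌊y⌋ := by
    rw [hi, count_sturmian α ρ h0 h1 n i]
    have : ρ + ((i + n : ℕ) : ℝ) * α = y + (n : ℝ) * α := by rw [hy]; push_cast; ring
    rw [this]
  -- first half count
  have htake : t.take m = (List.range m).map fun k => sturmian α ρ (i + k) := by
    rw [hi, ← List.map_take, List.take_range, min_eq_left (by omega)]
  have hu : ((t.take m).count true : ℤ) = ⌊y + (m : ℝ) * α⌋ - ⌊y⌋ := by
    rw [htake, count_sturmian α ρ h0 h1 m i]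
    have : ρ + ((i + m : ℕ) : ℝ) * α = y + (m : ℝ) * α := by rw [hy]; push_cast; ring
    rw [this]
  have hsplit : (t.take m).count true + (t.drop m).count true = t.count true := by
    conv_rhs => rw [← List.take_append_drop m t, List.count_append]
  -- bounds
  have b1 := floor_add_bounds y ((m : ℝ) * α)
  have b2 := floor_add_bounds (y + (m : ℝ) * α) ((m : ℝ) * α)
  have b3 := floor_add_bounds y ((n : ℝ) * α)
  have e2 : y + (n : ℝ) * α = (y + (m : ℝ) * α) + (m : ℝ) * α := by
    rw [hm]; push_cast; ring
  rw [← e2] at b2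
  have hceil : ⌈(n : ℝ) * α⌉ = ⌊(n : ℝ) * α⌋ + 1 :=
    ceil_irr _ (hirr.natCast_mul hn.ne')
  have hiff := abelianSquare_iff t m (by omega)
  constructor
  · rintro ⟨k, hk⟩
    rw [hiff]
    omega
  · rintro ⟨k, hk⟩
    rw [hiff, hceil]
    omega
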